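/- With the definitions of ℛ, 𝒮, U± as above, for 2M×κ real matrices P, Q, R, S one has η±(P,Q,R,S) = η±(Q,P,S,R), using the identities ℛ(P,Q)ℛ(R,S)^T = J_{2M} ℛ(Q,P) ℛ(S,R)^T J_{2M} and 𝒮(P,Q)𝒮(R,S)^T = (I₂⊗J_M) 𝒮(Q,P) 𝒮(S,R)^T (I₂⊗J_M). -/

import Mathlib

open Matrix Finset

/-- The `n × n` exchange (anti-identity) matrix `J_n`. -/
def Jmat (n : ℕ) : Matrix (Fin n) (Fin n) ℝ :=
  fun i j => if (i : ℕ) + (j : ℕ) = n - 1 then 1 else 0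

/-- Row-wise convolution: each row of `A` convolved with the corresponding row of `B`,
producing rows of length `2κ − 1`. -/
def rowConv {m κ : ℕ} (A B : Matrix (Fin m) (Fin κ) ℝ) :
    Matrix (Fin m) (Fin (2 * κ - 1)) ℝ :=
  fun i k => ∑ a : Fin κ, ∑ b : Fin κ,
    if (a : ℕ) + (b : ℕ) = (k : ℕ) then A i a * B i b else 0

/-- The matrix `J₂ ⊗ I_M`, acting on `2M` rows by swapping the two halves. -/
def swapHalves (M : ℕ) : Matrix (Fin (2 * M)) (Fin (2 * M)) ℝ :=
  fun i j => if ((i : ℕ) + M) % (2 * M) = (j : ℕ) then 1 else 0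

/-- The matrix `U^ε = I₂ ⊗ (I_M + ε J_M)` (for `ε = 1` this is `U⁺`, for `ε = -1` it is `U⁻`). -/
def Umat (M : ℕ) (ε : ℝ) : Matrix (Fin (2 * M)) (Fin (2 * M)) ℝ :=
  fun i j => (if i = j then (1 : ℝ) else 0) +
    ε * (if (i : ℕ) / M = (j : ℕ) / M ∧ (i : ℕ) % M + (j : ℕ) % M = M - 1 then 1 else 0)

/-- `ℛ(P,Q) = P ⊛ (J_{2M} Q)`. -/
def Rcal {M κ : ℕ} (P Q : Matrix (Fin (2 * M)) (Fin κ) ℝ) :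
    Matrix (Fin (2 * M)) (Fin (2 * κ - 1)) ℝ :=
  rowConv P (Jmat (2 * M) * Q)

/-- `𝒮(P,Q) = ((J₂ ⊗ I_M) P) ⊛ (J_{2M} Q)`. -/
def Scal {M κ : ℕ} (P Q : Matrix (Fin (2 * M)) (Fin κ) ℝ) :
    Matrix (Fin (2 * M)) (Fin (2 * κ - 1)) ℝ :=
  rowConv (swapHalves M * P) (Jmat (2 * M) * Q)

/-- `η` with sign `ε`:
`η^ε(P,Q,R,S) = (1/(2M)) tr[U^ε ℛ(P,Q) ℛ(R,S)ᵀ + U^{-ε} 𝒮(P,Q) 𝒮(R,S)ᵀ]`.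
For `ε = 1` this is the quantity `η^{(+,-)}` (with `U⁺` on `ℛ` and `U⁻` on `𝒮`);
for `ε = -1` it is `η^{(-,+)}`. -/
noncomputable def etaSign {M κ : ℕ} (ε : ℝ) (P Q R S : Matrix (Fin (2 * M)) (Fin κ) ℝ) : ℝ :=
  (1 / (2 * (M : ℝ))) *
    Matrix.trace (Umat M ε * Rcal P Q * (Rcal R S)ᵀ + Umat M (-ε) * Scal P Q * (Scal R S)ᵀ)

/-- Arrange a pulse of length `2Mκ` into a `2M × κ` matrix column by column. -/
def toMat (M κ : ℕ) (p : Fin (2 * M * κ) → ℝ) : Matrix (Fin (2 * M)) (Fin κ) ℝ :=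
  fun i k => p ⟨(k : ℕ) * (2 * M) + (i : ℕ), by
    have h1 := i.isLt
    have h2 := k.isLt
    calc (k : ℕ) * (2 * M) + (i : ℕ) < ((k : ℕ) + 1) * (2 * M) := by
          rw [Nat.add_mul, Nat.one_mul]; omega
      _ ≤ κ * (2 * M) := Nat.mul_le_mul_right _ h2
      _ = 2 * M * κ := Nat.mul_comm _ _⟩

def revF (n : ℕ) (i : Fin n) : Fin n := ⟨n - 1 - (i : ℕ), by have := i.isLt; omega⟩

def sHalf (M : ℕ) (i : Fin (2 * M)) : Fin (2 * M) :=
  ⟨if (i : ℕ) < M then (i : ℕ) + M else (i : ℕ) - M, by have := i.isLt; split <;> omega⟩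

def sigmaF (M : ℕ) (i : Fin (2 * M)) : Fin (2 * M) := revF (2 * M) (sHalf M i)

lemma revF_revF (n : ℕ) (i : Fin n) : revF n (revF n i) = i := by
  have := i.isLt; simp only [revF, Fin.ext_iff]; omega

lemma sHalf_revF (M : ℕ) (i : Fin (2 * M)) : sHalf M (revF (2 * M) i) = revF (2 * M) (sHalf M i) := by
  have := i.isLt; simp only [sHalf, revF, Fin.ext_iff]
  show (if 2 * M - 1 - (i:ℕ) < M then 2 * M - 1 - (i:ℕ) + M else 2 * M - 1 - (i:ℕ) - M) =
    2 * M - 1 - if (i:ℕ) < M then (i:ℕ) + M else (i:ℕ) - M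
  split_ifs <;> omega

lemma sHalf_invol (M : ℕ) (i : Fin (2 * M)) : sHalf M (sHalf M i) = i := by
  have := i.isLt; simp only [sHalf, Fin.ext_iff]; split <;> split <;> omega

lemma sigmaF_invol (M : ℕ) (i : Fin (2 * M)) : sigmaF M (sigmaF M i) = i := by
  unfold sigmaF
  rw [sHalf_revF, revF_revF, sHalf_invol]

lemma sHalf_sigmaF (M : ℕ) (i : Fin (2 * M)) : sHalf M (sigmaF M i) = revF (2 * M) i := by
  unfold sigmaF; rw [sHalf_revF, sHalf_invol]

lemma revF_sigmaF (M : ℕ) (i : Fin (2 * M)) : revF (2 * M) (sigmaF M i) = sHalf M i := by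
  unfold sigmaF; rw [revF_revF]

lemma key_rev (M x : ℕ) (hx : x < 2 * M) :
    (2 * M - 1 - x) / M = 1 - x / M ∧ (2 * M - 1 - x) % M = M - 1 - x % M := by
  have hM : 0 < M := by omega
  rcases lt_or_ge x M with h | h
  · rw [Nat.div_eq_of_lt h, Nat.mod_eq_of_lt h,
      show 2 * M - 1 - x = (M - 1 - x) + M by omega, Nat.add_div_right _ hM,
      Nat.add_mod_right, Nat.div_eq_of_lt (by omega), Nat.mod_eq_of_lt (by omega)]
    omega
  · rw [Nat.div_eq_of_lt_le (by omega : 1 * M ≤ x) (by omega : x < (1 + 1) * M),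
      Nat.mod_eq_sub_mod h, Nat.mod_eq_of_lt (by omega),
      show 2 * M - 1 - x = M - 1 - (x - M) by omega, Nat.div_eq_of_lt (by omega),
      Nat.mod_eq_of_lt (by omega)]
    omega

lemma key_sigma (M : ℕ) (i : Fin (2 * M)) :
    ((sigmaF M i : Fin (2 * M)) : ℕ) / M = (i : ℕ) / M ∧
    ((sigmaF M i : Fin (2 * M)) : ℕ) % M = M - 1 - (i : ℕ) % M := by
  have hi := i.isLt
  have hM : 0 < M := by omega
  have hval : ((sigmaF M i : Fin (2 * M)) : ℕ)
      = if (i : ℕ) < M then M - 1 - (i : ℕ) else 3 * M - 1 - (i : ℕ) := by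
    simp only [sigmaF, revF, sHalf]; split <;> omega
  rcases lt_or_ge ((i : ℕ)) M with h | h
  · rw [hval, if_pos h, Nat.div_eq_of_lt h, Nat.mod_eq_of_lt h,
      Nat.div_eq_of_lt (by omega), Nat.mod_eq_of_lt (by omega)]
    omega
  · have e1 : (i : ℕ) / M = 1 :=
      Nat.div_eq_of_lt_le (by omega : 1 * M ≤ (i : ℕ)) (by omega : (i : ℕ) < (1 + 1) * M)
    have e2 : (i : ℕ) % M = (i : ℕ) - M := by
      rw [Nat.mod_eq_sub_mod h, Nat.mod_eq_of_lt (by omega)]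
    have e3 : ((sigmaF M i : Fin (2 * M)) : ℕ) = (M - 1 - ((i : ℕ) - M)) + M := by
      rw [hval, if_neg (by omega)]; omega
    rw [e3, Nat.add_div_right _ hM, Nat.add_mod_right, Nat.div_eq_of_lt (by omega),
      Nat.mod_eq_of_lt (by omega), e1, e2]
    omega

lemma Umat_rev (M : ℕ) (ε : ℝ) (i j : Fin (2 * M)) :
    Umat M ε (revF (2 * M) i) (revF (2 * M) j) = Umat M ε i j := by
  have hi := i.isLt; have hj := j.isLt
  obtain ⟨d1, m1⟩ := key_rev M i hi
  obtain ⟨d2, m2⟩ := key_rev M j hj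
  have hM : 0 < M := by omega
  have h2i := Nat.mod_lt (i : ℕ) hM
  have h2j := Nat.mod_lt (j : ℕ) hM
  have h3i : (i : ℕ) / M < 2 := Nat.div_lt_of_lt_mul (by omega : (i : ℕ) < M * 2)
  have h3j : (j : ℕ) / M < 2 := Nat.div_lt_of_lt_mul (by omega : (j : ℕ) < M * 2)
  have hval : ((revF (2*M) i : Fin (2*M)) : ℕ) = 2 * M - 1 - (i:ℕ) := rfl
  have hval' : ((revF (2*M) j : Fin (2*M)) : ℕ) = 2 * M - 1 - (j:ℕ) := rfl
  unfold Umat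
  congr 1
  · exact if_congr (by simp only [Fin.ext_iff, hval, hval']; omega) rfl rfl
  · exact congrArg (ε * ·) <| if_congr (by rw [hval, hval', d1, d2, m1, m2]; omega) rfl rfl

lemma Umat_sigma (M : ℕ) (ε : ℝ) (i j : Fin (2 * M)) :
    Umat M ε (sigmaF M i) (sigmaF M j) = Umat M ε i j := by
  have hi := i.isLt; have hj := j.isLt
  obtain ⟨d1, m1⟩ := key_sigma M i
  obtain ⟨d2, m2⟩ := key_sigma M j
  have hM : 0 < M := by omega
  have h2i := Nat.mod_lt (i : ℕ) hM
  have h2j := Nat.mod_lt (j : ℕ) hM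
  unfold Umat
  congr 1
  · refine if_congr ?_ rfl rfl
    constructor
    · intro h; have := congrArg (sigmaF M) h; rwa [sigmaF_invol, sigmaF_invol] at this
    · intro h; rw [h]
  · exact congrArg (ε * ·) <| if_congr (by rw [d1, d2, m1, m2]; omega) rfl rfl

lemma Jmat_apply (n : ℕ) (i j : Fin n) :
    Jmat n i j = if (i : ℕ) + (j : ℕ) = n - 1 then 1 else 0 := rfl

lemma swapHalves_apply (M : ℕ) (i j : Fin (2 * M)) :
    swapHalves M i j = if ((i : ℕ) + M) % (2 * M) = (j : ℕ) then 1 else 0 := rfl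

lemma Jmat_mul_apply {n κ : ℕ} (Q : Matrix (Fin n) (Fin κ) ℝ) (i : Fin n) (b : Fin κ) :
    (Jmat n * Q) i b = Q (revF n i) b := by
  have hi := i.isLt
  rw [Matrix.mul_apply, Fintype.sum_eq_single (revF n i)]
  · rw [Jmat_apply, if_pos (by simp only [revF]; omega), one_mul]
  · intro j hj
    rw [Jmat_apply, if_neg, zero_mul]
    intro h; apply hj; simp only [Fin.ext_iff, revF]; omega

lemma swapHalves_mul_apply {M κ : ℕ} (P : Matrix (Fin (2 * M)) (Fin κ) ℝ)
    (i : Fin (2 * M)) (a : Fin κ) : (swapHalves M * P) i a = P (sHalf M i) a := by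
  have hi := i.isLt
  have hmod : ((i : ℕ) + M) % (2 * M) = ((sHalf M i : Fin (2 * M)) : ℕ) := by
    simp only [sHalf]
    rcases lt_or_ge ((i : ℕ)) M with h | h
    · rw [if_pos h]; exact Nat.mod_eq_of_lt (by omega)
    · rw [if_neg (by omega), show (i : ℕ) + M = ((i:ℕ) - M) + 2 * M by omega,
        Nat.add_mod_right, Nat.mod_eq_of_lt (by omega)]
  rw [Matrix.mul_apply, Fintype.sum_eq_single (sHalf M i)]
  · rw [swapHalves_apply, if_pos hmod, one_mul]
  · intro j hj
    rw [swapHalves_apply, if_neg, zero_mul]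
    rw [hmod]; intro h; exact hj (Fin.ext h.symm)

lemma Rcal_swap {M κ : ℕ} (P Q : Matrix (Fin (2 * M)) (Fin κ) ℝ) (i : Fin (2 * M))
    (k : Fin (2 * κ - 1)) : Rcal P Q i k = Rcal Q P (revF (2 * M) i) k := by
  unfold Rcal rowConv
  simp only [Jmat_mul_apply, revF_revF]
  rw [Finset.sum_comm]
  refine Finset.sum_congr rfl fun b _ => Finset.sum_congr rfl fun a _ => ?_
  rw [mul_comm (P i a), Nat.add_comm ((a : Fin κ) : ℕ) ((b : Fin κ) : ℕ)]

lemma Scal_swap {M κ : ℕ} (P Q : Matrix (Fin (2 * M)) (Fin κ) ℝ) (i : Fin (2 * M))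
    (k : Fin (2 * κ - 1)) : Scal P Q i k = Scal Q P (sigmaF M i) k := by
  unfold Scal rowConv
  simp only [Jmat_mul_apply, swapHalves_mul_apply, sHalf_sigmaF, revF_sigmaF]
  rw [Finset.sum_comm]
  refine Finset.sum_congr rfl fun b _ => Finset.sum_congr rfl fun a _ => ?_
  rw [mul_comm (P (sHalf M i) a), Nat.add_comm ((a : Fin κ) : ℕ) ((b : Fin κ) : ℕ)]

lemma trace_key {n m : ℕ} (U : Matrix (Fin n) (Fin n) ℝ) (F G F' G' : Matrix (Fin n) (Fin m) ℝ)
    (π : Fin n → Fin n) (hπ : Function.Involutive π)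
    (hU : ∀ i j, U (π i) (π j) = U i j)
    (hF : ∀ i k, F i k = F' (π i) k) (hG : ∀ i k, G i k = G' (π i) k) :
    Matrix.trace (U * F * Gᵀ) = Matrix.trace (U * F' * G'ᵀ) := by
  have expand : ∀ X Y : Matrix (Fin n) (Fin m) ℝ,
      Matrix.trace (U * X * Yᵀ) = ∑ i, ∑ k, ∑ j, U i j * X j k * Y i k := by
    intro X Y
    simp only [Matrix.trace, Matrix.diag, Matrix.mul_apply, Matrix.transpose_apply,
      Finset.sum_mul]
  rw [expand, expand]
  refine Fintype.sum_bijective π hπ.bijective _ _ fun x => ?_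
  refine Finset.sum_congr rfl fun k _ => ?_
  refine Fintype.sum_bijective π hπ.bijective _ _ fun j => ?_
  rw [hU, hF, hG]

/-- `η^±(P,Q,R,S) = η^±(Q,P,S,R)` (for both choices of sign). -/
theorem etaSign_swap_within_pairs {M κ : ℕ} (ε : ℝ) (hε : ε = 1 ∨ ε = -1)
    (P Q R S : Matrix (Fin (2 * M)) (Fin κ) ℝ) :
    etaSign ε P Q R S = etaSign ε Q P S R := by
  have h1 : Matrix.trace (Umat M ε * Rcal P Q * (Rcal R S)ᵀ)
      = Matrix.trace (Umat M ε * Rcal Q P * (Rcal S R)ᵀ) :=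
    trace_key (Umat M ε) (Rcal P Q) (Rcal R S) (Rcal Q P) (Rcal S R)
      (revF (2 * M)) (revF_revF (2 * M)) (Umat_rev M ε)
      (fun i k => Rcal_swap P Q i k) (fun i k => Rcal_swap R S i k)
  have h2 : Matrix.trace (Umat M (-ε) * Scal P Q * (Scal R S)ᵀ)
      = Matrix.trace (Umat M (-ε) * Scal Q P * (Scal S R)ᵀ) :=
    trace_key (Umat M (-ε)) (Scal P Q) (Scal R S) (Scal Q P) (Scal S R)
      (sigmaF M) (sigmaF_invol M) (Umat_sigma M (-ε))
      (fun i k => Scal_swap P Q i k) (fun i k => Scal_swap R S i k)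
  unfold etaSign
  rw [Matrix.trace_add, Matrix.trace_add, h1, h2]
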